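/- Let $H$ be a continuous distribution function of a non-degenerate probability measure on $[0,1]$ with mean $1/2$, and let $r_n \to \infty$. Define $g_n(f) = r_n\{\Phi(H + r_n^{-1}f) - H\}$ for $f$ such that $H + r_n^{-1} f$ is a non-degenerate distribution function on $[0,1]$, and define $(g(f))(w) = f(w) - \sigma_H^{-2}\int_0^1 f(v)\,dv \int_0^w (1/2 - v)\, dH(v)$. If $f_n$ are in the domain of $g_n$ and $\|f_n - f\|_\infty \to 0$ for some continuous $f$ on $[0,1]$, then $\|g_n(f_n) - g(f)\|_\infty \to 0$. In particular, $\Phi$ is Hadamard differentiable at $H$ tangentially to $\mathcal{C}([0,1])$ with derivative $g$. -/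

import Mathlib

open MeasureTheory Set Filter

noncomputable def cdf01 (μ : Measure ℝ) (w : ℝ) : ℝ := (μ (Iic w)).toReal

noncomputable def mean01 (μ : Measure ℝ) : ℝ := ∫ v in Icc (0:ℝ) 1, v ∂μ

noncomputable def var01 (μ : Measure ℝ) : ℝ :=
  ∫ v in Icc (0:ℝ) 1, (v - mean01 μ)^2 ∂μ

noncomputable def PhiMap (μ : Measure ℝ) (w : ℝ) : ℝ :=
  cdf01 μ w - (mean01 μ - 1/2) / var01 μ * ∫ v in Icc (0:ℝ) w, (v - mean01 μ) ∂μ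


set_option linter.unusedSectionVars false
set_option maxHeartbeats 1000000
open Topology

section basics
variable {μ : Measure ℝ} [IsProbabilityMeasure μ]

lemma cdf01_mono : Monotone (cdf01 μ) := fun a b hab => by
  apply ENNReal.toReal_mono (measure_ne_top _ _) (measure_mono (Iic_subset_Iic.2 hab))

lemma cdf01_meas : Measurable (cdf01 μ) := (cdf01_mono).measurable

lemma cdf01_nonneg (w : ℝ) : 0 ≤ cdf01 μ w := ENNReal.toReal_nonneg

lemma cdf01_le_one (w : ℝ) : cdf01 μ w ≤ 1 := by
  have := measure_mono (subset_univ (Iic w)) (μ := μ)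
  simpa [cdf01] using ENNReal.toReal_mono (by simp) this

variable (hs : μ (Icc (0:ℝ) 1)ᶜ = 0)
include hs

lemma ae_mem01 : ∀ᵐ v ∂μ, v ∈ Icc (0:ℝ) 1 := by
  rw [ae_iff]; exact hs

lemma restrict01 : μ.restrict (Icc (0:ℝ) 1) = μ :=
  Measure.restrict_eq_self_of_ae_mem (ae_mem01 hs)

lemma meas_Icc_toReal {w : ℝ} (hw : 0 ≤ w) : (μ (Icc 0 w)).toReal = cdf01 μ w := by
  have h1 : μ (Iic w) ≤ μ (Icc 0 w) := by
    rw [← measure_inter_conull (t := Icc (0:ℝ) 1) hs]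
    exact measure_mono (fun x hx => ⟨hx.2.1, hx.1⟩)
  have h2 : μ (Icc 0 w) ≤ μ (Iic w) := measure_mono (fun x hx => hx.2)
  rw [cdf01, le_antisymm h2 h1]

lemma cdf01_one {w : ℝ} (hw : 1 ≤ w) : cdf01 μ w = 1 := by
  have h1 : μ (Icc (0:ℝ) 1) ≤ μ (Iic w) := measure_mono (fun x hx => le_trans hx.2 hw)
  have h2 : μ (Icc (0:ℝ) 1) = 1 := by
    have := measure_add_measure_compl (μ := μ) (measurableSet_Icc (a := (0:ℝ)) (b := 1))
    rw [hs, add_zero] at this; simp [this]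
  have : μ (Iic w) = 1 := le_antisymm (by simp [prob_le_one]) (h2 ▸ h1)
  simp [cdf01, this]

lemma meas_Ioi_toReal (t : ℝ) : (μ (Ioi t)).toReal = 1 - cdf01 μ t := by
  have := measure_compl (measurableSet_Iic (a := t)) (measure_ne_top μ _)
  rw [compl_Iic] at this
  rw [this, measure_univ]
  rw [ENNReal.toReal_sub_of_le (prob_le_one) (by simp)]
  simp [cdf01]

lemma moment_formula (g : ℝ → ℝ) (hg : Continuous g) (hgnn : ∀ t, 0 ≤ t → 0 ≤ g t)
    {w : ℝ} (hw : w ∈ Icc (0:ℝ) 1) :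
    ∫ v in Icc (0:ℝ) w, (∫ t in (0:ℝ)..v, g t) ∂μ
      = (∫ t in Ioc (0:ℝ) w, (1 - cdf01 μ t) * g t)
        - (∫ t in (0:ℝ)..w, g t) * (1 - cdf01 μ w) := by
  set F := cdf01 μ with hF
  set G : ℝ → ℝ := fun s => ∫ t in (0:ℝ)..s, g t with hGdef
  have hG : Continuous G := intervalIntegral.continuous_primitive
    (fun a b => hg.intervalIntegrable a b) 0
  set φ : ℝ → ℝ := fun v => G (min v w) with hφdef
  have hφc : Continuous φ := hG.comp (continuous_id.min continuous_const)
  obtain ⟨C, hC⟩ := (isCompact_Icc (a := (0:ℝ)) (b := 1)).exists_bound_of_continuousOn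
    hφc.continuousOn
  have hφint : Integrable φ μ := by
    refine Integrable.mono' (integrable_const C) hφc.aestronglyMeasurable ?_
    filter_upwards [ae_mem01 hs] with v hv using hC v hv
  have hφnn : 0 ≤ᵐ[μ] φ := by
    filter_upwards [ae_mem01 hs] with v hv
    exact intervalIntegral.integral_nonneg (le_min hv.1 hw.1)
      (fun u hu => hgnn u hu.1)
  have key := lintegral_comp_eq_lintegral_meas_le_mul μ (f := fun v => min v w) (g := g)
    (by filter_upwards [ae_mem01 hs] with v hv; exact le_min hv.1 hw.1)
    ((continuous_id.min continuous_const).measurable.aemeasurable)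
    (fun t ht => hg.intervalIntegrable 0 t)
    (by filter_upwards [ae_restrict_mem measurableSet_Ioi] with t ht
        exact hgnn t (le_of_lt ht))
  have hLHS : ∫⁻ ω, ENNReal.ofReal (∫ t in (0:ℝ)..(min ω w), g t) ∂μ
      = ENNReal.ofReal (∫ v, φ v ∂μ) :=
    (ofReal_integral_eq_lintegral_ofReal hφint hφnn).symm
  -- RHS manipulation
  have hsplit : (Ioc (0:ℝ) w) ∪ (Ioi w) = Ioi 0 := Ioc_union_Ioi_eq_Ioi hw.1
  have hRHS : ∫⁻ t in Ioi (0:ℝ), μ {a | t ≤ min a w} * ENNReal.ofReal (g t)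
      = ∫⁻ t in Ioc (0:ℝ) w, μ {a | t ≤ min a w} * ENNReal.ofReal (g t) := by
    rw [← hsplit, lintegral_union measurableSet_Ioi (Ioc_disjoint_Ioi le_rfl)]
    have : ∫⁻ t in Ioi w, μ {a | t ≤ min a w} * ENNReal.ofReal (g t) = 0 := by
      rw [← lintegral_zero (μ := volume.restrict (Ioi w))]
      refine setLIntegral_congr_fun measurableSet_Ioi (fun t ht => ?_)
      have : {a : ℝ | t ≤ min a w} = ∅ := by
        ext a; simp only [mem_setOf_eq, mem_empty_iff_false, iff_false, not_le]
        exact lt_of_le_of_lt (min_le_right a w) ht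
      rw [this, measure_empty, zero_mul]
    rw [this, add_zero]
  have hIci : ∀ t ∈ Ioc (0:ℝ) w, {a : ℝ | t ≤ min a w} = Ici t := by
    intro t ht
    ext a; simp only [mem_setOf_eq, le_min_iff, mem_Ici]
    exact ⟨fun h => h.1, fun h => ⟨h, ht.2⟩⟩
  have hbd : ∀ t, 0 ≤ 1 - F t := fun t => sub_nonneg.2 (cdf01_le_one t)
  have hmeas_int : Integrable (fun t => (1 - F t) * g t) (volume.restrict (Ioc 0 w)) := by
    obtain ⟨Cg, hCg⟩ := (isCompact_Icc (a := (0:ℝ)) (b := 1)).exists_bound_of_continuousOn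
      hg.continuousOn
    refine Integrable.mono' (integrable_const Cg)
      (((measurable_const.sub cdf01_meas).mul hg.measurable).aestronglyMeasurable) ?_
    filter_upwards [ae_restrict_mem measurableSet_Ioc] with t ht
    have h1 : |1 - F t| ≤ 1 := by
      rw [abs_of_nonneg (hbd t)]
      have := cdf01_nonneg (μ := μ) t; linarith
    calc ‖(1 - F t) * g t‖ = |1 - F t| * ‖g t‖ := by rw [norm_mul]; rfl
      _ ≤ 1 * Cg := by
          refine mul_le_mul h1 (hCg t ⟨le_of_lt ht.1, le_trans ht.2 hw.2⟩) (norm_nonneg _)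
            zero_le_one
      _ = Cg := one_mul Cg
  have hRHS2 : ∫⁻ t in Ioc (0:ℝ) w, μ {a | t ≤ min a w} * ENNReal.ofReal (g t)
      = ENNReal.ofReal (∫ t in Ioc (0:ℝ) w, (1 - F t) * g t) := by
    rw [ofReal_integral_eq_lintegral_ofReal hmeas_int
      (by filter_upwards [ae_restrict_mem measurableSet_Ioc] with t ht
          exact mul_nonneg (hbd t) (hgnn t (le_of_lt ht.1)))]
    refine lintegral_congr_ae ?_
    have hae := meas_le_ae_eq_meas_lt μ (volume.restrict (Ioc (0:ℝ) w)) (fun a : ℝ => a)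
    filter_upwards [ae_restrict_mem measurableSet_Ioc, hae] with t ht hae_t
    rw [hIci t ht]
    have h1 : μ (Ici t) = μ (Ioi t) := by
      have : {a : ℝ | t ≤ a} = Ici t := rfl
      have h2 : {a : ℝ | t < a} = Ioi t := rfl
      rw [← this, ← h2]; exact hae_t
    rw [h1, ← ENNReal.ofReal_toReal (measure_ne_top μ (Ioi t)), meas_Ioi_toReal hs,
      ← ENNReal.ofReal_mul (hbd t)]
  -- combine
  have hkey : ENNReal.ofReal (∫ v, φ v ∂μ)
      = ENNReal.ofReal (∫ t in Ioc (0:ℝ) w, (1 - F t) * g t) := by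
    rw [← hLHS, key, hRHS, hRHS2]
  have heq : ∫ v, φ v ∂μ = ∫ t in Ioc (0:ℝ) w, (1 - F t) * g t := by
    have h1 : 0 ≤ ∫ v, φ v ∂μ := integral_nonneg_of_ae hφnn
    have h2 : 0 ≤ ∫ t in Ioc (0:ℝ) w, (1 - F t) * g t := by
      refine setIntegral_nonneg measurableSet_Ioc fun t ht =>
        mul_nonneg (hbd t) (hgnn t (le_of_lt ht.1))
    exact (ENNReal.ofReal_eq_ofReal_iff h1 h2).1 hkey
  -- split the left side
  have hsplit2 : ∫ v in Icc (0:ℝ) w, φ v ∂μ + ∫ v in (Icc (0:ℝ) w)ᶜ, φ v ∂μ = ∫ v, φ v ∂μ :=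
    integral_add_compl measurableSet_Icc hφint
  have h3 : ∫ v in Icc (0:ℝ) w, φ v ∂μ = ∫ v in Icc (0:ℝ) w, (∫ t in (0:ℝ)..v, g t) ∂μ := by
    refine setIntegral_congr_fun measurableSet_Icc fun v hv => ?_
    simp only [hφdef, min_eq_left hv.2]; rfl
  have h4 : ∫ v in (Icc (0:ℝ) w)ᶜ, φ v ∂μ = G w * (1 - F w) := by
    have : ∫ v in (Icc (0:ℝ) w)ᶜ, φ v ∂μ = ∫ _ in (Icc (0:ℝ) w)ᶜ, G w ∂μ := by
      refine setIntegral_congr_ae measurableSet_Icc.compl ?_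
      filter_upwards [ae_mem01 hs] with v hv1 hv2
      have : w ≤ v := by
        by_contra h
        exact hv2 ⟨hv1.1, le_of_lt (not_le.1 h)⟩
      simp only [hφdef, min_eq_right this]
    rw [this, setIntegral_const, smul_eq_mul, mul_comm]
    congr 1
    have hcompl := measure_compl (measurableSet_Icc (a := (0:ℝ)) (b := w)) (measure_ne_top μ _)
    rw [measureReal_def, hcompl, measure_univ, ENNReal.toReal_sub_of_le (prob_le_one) (by simp),
      ENNReal.toReal_one, meas_Icc_toReal hs hw.1]
  rw [← h3, ← heq] at *
  linarith [hsplit2, h4]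

omit hs in
lemma cdf01_intInt (a b : ℝ) : IntervalIntegrable (cdf01 μ) volume a b :=
  (cdf01_mono (μ := μ)).intervalIntegrable

lemma first_moment {w : ℝ} (hw : w ∈ Icc (0:ℝ) 1) :
    ∫ v in Icc (0:ℝ) w, v ∂μ = w * cdf01 μ w - ∫ t in (0:ℝ)..w, cdf01 μ t := by
  have h := moment_formula hs (fun _ => (1:ℝ)) continuous_const (fun _ _ => zero_le_one) hw
  have h1 : ∀ v : ℝ, (∫ t in (0:ℝ)..v, (1:ℝ)) = v := fun v => by simp
  have h2 : (∫ v in Icc (0:ℝ) w, (∫ t in (0:ℝ)..v, (1:ℝ)) ∂μ) = ∫ v in Icc (0:ℝ) w, v ∂μ := by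
    refine setIntegral_congr_fun measurableSet_Icc fun v _ => h1 v
  rw [h2, h1 w] at h
  have h3 : (∫ t in Ioc (0:ℝ) w, (1 - cdf01 μ t) * 1)
      = w - ∫ t in (0:ℝ)..w, cdf01 μ t := by
    rw [← intervalIntegral.integral_of_le hw.1]
    rw [intervalIntegral.integral_congr (g := fun t => 1 - cdf01 μ t) (fun t _ => mul_one _)]
    rw [intervalIntegral.integral_sub intervalIntegrable_const (cdf01_intInt 0 w)]
    simp
  rw [h3] at h
  rw [h]; ring

lemma second_moment : ∫ v in Icc (0:ℝ) 1, v^2 ∂μ = 1 - ∫ t in (0:ℝ)..1, 2*t*cdf01 μ t := by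
  have h := moment_formula hs (fun t => 2*t) (continuous_const.mul continuous_id)
    (fun t ht => by simpa using mul_nonneg zero_le_two ht) (w := 1) ⟨zero_le_one, le_refl 1⟩
  have h1 : ∀ v : ℝ, (∫ t in (0:ℝ)..v, 2*t) = v^2 := fun v => by
    rw [intervalIntegral.integral_const_mul, integral_id]; ring
  have h2 : (∫ v in Icc (0:ℝ) 1, (∫ t in (0:ℝ)..v, 2*t) ∂μ) = ∫ v in Icc (0:ℝ) 1, v^2 ∂μ :=
    setIntegral_congr_fun measurableSet_Icc fun v _ => h1 v
  rw [h2, h1 1, cdf01_one hs (le_refl 1)] at h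
  have hInt2 : IntervalIntegrable (fun t => 2*t*cdf01 μ t) volume 0 1 :=
    (cdf01_intInt 0 1).continuousOn_mul (continuous_const.mul continuous_id).continuousOn
  have h3 : (∫ t in Ioc (0:ℝ) 1, (1 - cdf01 μ t) * (2*t))
      = 1 - ∫ t in (0:ℝ)..1, 2*t*cdf01 μ t := by
    rw [← intervalIntegral.integral_of_le zero_le_one]
    rw [intervalIntegral.integral_congr (g := fun t => 2*t - 2*t*cdf01 μ t)
      (fun t _ => by ring)]
    have h4 : (∫ x in (0:ℝ)..1, (2*x - 2*x*cdf01 μ x))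
        = (∫ x in (0:ℝ)..1, 2*x) - ∫ x in (0:ℝ)..1, 2*x*cdf01 μ x :=
      intervalIntegral.integral_sub ((continuous_const.mul continuous_id).intervalIntegrable 0 1)
        hInt2
    have h5 : (∫ t in (0:ℝ)..1, 2*t) = 1 := by rw [h1 1]; norm_num
    rw [h4, h5]
  rw [h3] at h
  rw [h]; ring


end basics


section derived
variable {μ : Measure ℝ} [IsProbabilityMeasure μ] (hs : μ (Icc (0:ℝ) 1)ᶜ = 0)
include hs

lemma mean01_eq : mean01 μ = 1 - ∫ t in (0:ℝ)..1, cdf01 μ t := by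
  have h := first_moment hs (w := 1) ⟨zero_le_one, le_refl 1⟩
  rw [cdf01_one hs (le_refl 1)] at h
  rw [mean01, h]; ring

lemma var01_eq : var01 μ
    = (1 - ∫ t in (0:ℝ)..1, 2*t*cdf01 μ t) - (mean01 μ)^2 := by
  set m := mean01 μ with hm
  have i2 : IntegrableOn (fun v : ℝ => v^2) (Icc (0:ℝ) 1) μ :=
    (continuous_pow 2).continuousOn.integrableOn_compact isCompact_Icc
  have i1 : IntegrableOn (fun v : ℝ => (2*m)*v) (Icc (0:ℝ) 1) μ :=
    (continuous_const.mul continuous_id).continuousOn.integrableOn_compact isCompact_Icc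
  have i0 : IntegrableOn (fun _ : ℝ => m^2) (Icc (0:ℝ) 1) μ :=
    integrableOn_const (measure_ne_top μ _)
  have hmu : (μ (Icc (0:ℝ) 1)).toReal = 1 := by
    rw [meas_Icc_toReal hs zero_le_one, cdf01_one hs (le_refl 1)]
  have e1 : var01 μ = ∫ v in Icc (0:ℝ) 1, ((v^2 - (2*m)*v) + m^2) ∂μ := by
    rw [var01, ← hm]
    exact setIntegral_congr_fun measurableSet_Icc fun v _ => by ring
  have e2 : ∫ v in Icc (0:ℝ) 1, ((v^2 - (2*m)*v) + m^2) ∂μ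
      = (∫ v in Icc (0:ℝ) 1, (v^2 - (2*m)*v) ∂μ) + ∫ _ in Icc (0:ℝ) 1, m^2 ∂μ :=
    integral_add (i2.sub i1) i0
  have e3 : ∫ v in Icc (0:ℝ) 1, (v^2 - (2*m)*v) ∂μ
      = (∫ v in Icc (0:ℝ) 1, v^2 ∂μ) - ∫ v in Icc (0:ℝ) 1, (2*m)*v ∂μ :=
    integral_sub i2 i1
  have e4 : ∫ v in Icc (0:ℝ) 1, (2*m)*v ∂μ = (2*m) * ∫ v in Icc (0:ℝ) 1, v ∂μ :=
    integral_const_mul _ _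
  have e5 : ∫ v in Icc (0:ℝ) 1, v ∂μ = m := rfl
  rw [e1, e2, e3, e4, e5, setIntegral_const, measureReal_def, hmu, second_moment hs]
  simp; ring

lemma B_formula {w : ℝ} (hw : w ∈ Icc (0:ℝ) 1) :
    ∫ v in Icc (0:ℝ) w, (v - mean01 μ) ∂μ
      = w * cdf01 μ w - (∫ t in (0:ℝ)..w, cdf01 μ t) - mean01 μ * cdf01 μ w := by
  have i1 : IntegrableOn (fun v : ℝ => v) (Icc (0:ℝ) w) μ :=
    continuous_id.continuousOn.integrableOn_compact isCompact_Icc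
  have i0 : IntegrableOn (fun _ : ℝ => mean01 μ) (Icc (0:ℝ) w) μ :=
    integrableOn_const (measure_ne_top μ _)
  rw [integral_sub i1 i0, setIntegral_const, first_moment hs hw, smul_eq_mul,
    measureReal_def, meas_Icc_toReal hs hw.1]
  ring
end derived

/-- Hadamard differentiability of `Φ` at `H` tangentially to `C([0,1])`:
if `H + rₙ⁻¹ fₙ` are (nondegenerate) distribution functions on `[0,1]`, with
`‖fₙ - f‖_∞ → 0` for continuous `f`, then
`gₙ(fₙ) = rₙ {Φ(H + rₙ⁻¹ fₙ) - H} → g(f)` uniformly on `[0,1]`, where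
`(g(f))(w) = f(w) - σ_H⁻² ∫₀¹ f(v) dv ∫₀ʷ (1/2 - v) dH(v)`. -/
theorem PhiMap_hadamard_derivative
    (μH : Measure ℝ) [IsProbabilityMeasure μH] (hsH : μH (Icc (0:ℝ) 1)ᶜ = 0)
    (hHcont : Continuous (cdf01 μH)) (hHmean : mean01 μH = 1/2)
    (hHvar : 0 < var01 μH)
    (r : ℕ → ℝ) (hrpos : ∀ n, 0 < r n) (hr : Tendsto r atTop atTop)
    (f : ℝ → ℝ) (hf : ContinuousOn f (Icc (0:ℝ) 1))
    (fn : ℕ → ℝ → ℝ)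
    (μn : ℕ → Measure ℝ) [∀ n, IsProbabilityMeasure (μn n)]
    (hsn : ∀ n, μn n (Icc (0:ℝ) 1)ᶜ = 0)
    (hvarn : ∀ n, 0 < var01 (μn n))
    (hcdfn : ∀ n w, cdf01 (μn n) w = cdf01 μH w + fn n w / r n)
    (hconv : TendstoUniformlyOn fn f atTop (Icc (0:ℝ) 1)) :
    TendstoUniformlyOn (fun n w => r n * (PhiMap (μn n) w - cdf01 μH w))
      (fun w => f w - (var01 μH)⁻¹ * (∫ v in (0:ℝ)..1, f v) *
        ∫ v in Icc (0:ℝ) w, (1/2 - v) ∂μH)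
      atTop (Icc (0:ℝ) 1) := by
  have hrne : ∀ n, (r n : ℝ) ≠ 0 := fun n => (hrpos n).ne'
  set F := cdf01 μH with hFdef
  have hfn_eq : ∀ n w, fn n w = r n * (cdf01 (μn n) w - F w) := by
    intro n w; rw [hcdfn n w]; field_simp
    rw [add_sub_cancel_left, mul_div_assoc']; exact (mul_div_cancel_left₀ _ (hrne n)).symm
  have hfInt : IntervalIntegrable f volume 0 1 :=
    (hf.mono (by rw [uIcc_of_le zero_le_one])).intervalIntegrable
  have hfnInt : ∀ n, IntervalIntegrable (fn n) volume 0 1 := by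
    intro n
    have h : fn n = fun w => r n * (cdf01 (μn n) w - F w) := funext (hfn_eq n)
    rw [h]
    exact ((cdf01_intInt 0 1).sub (cdf01_intInt 0 1)).const_mul _
  set a := ∫ t in (0:ℝ)..1, f t with ha
  set an := fun n => ∫ t in (0:ℝ)..1, fn n t with han_def
  obtain ⟨Cf, hCf⟩ := (isCompact_Icc (a := (0:ℝ)) (b := 1)).exists_bound_of_continuousOn hf
  set M := Cf + 1 with hM
  have hMev : ∀ᶠ n in atTop, ∀ t ∈ Icc (0:ℝ) 1, |fn n t| ≤ M := by
    filter_upwards [Metric.tendstoUniformlyOn_iff.1 hconv 1 one_pos] with n hn t ht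
    have h1 := hn t ht
    rw [Real.dist_eq] at h1
    have h2 : |fn n t| ≤ |f t| + |f t - fn n t| := by
      have e : fn n t = f t - (f t - fn n t) := by ring
      calc |fn n t| = |f t - (f t - fn n t)| := by rw [← e]
        _ ≤ |f t| + |f t - fn n t| := abs_sub _ _
    have h3 := hCf t ht
    rw [Real.norm_eq_abs] at h3
    rw [hM]; linarith
  -- convergence of an to a
  have han : Tendsto an atTop (𝓝 a) := by
    rw [Metric.tendsto_atTop]
    intro ε hε
    obtain ⟨N, hN⟩ := eventually_atTop.1
      (Metric.tendstoUniformlyOn_iff.1 hconv (ε/2) (by positivity))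
    refine ⟨N, fun n hn => ?_⟩
    have h1 : an n - a = ∫ t in (0:ℝ)..1, (fn n t - f t) := by
      rw [intervalIntegral.integral_sub (hfnInt n) hfInt]
    have h2 : ‖∫ t in (0:ℝ)..1, (fn n t - f t)‖ ≤ (ε/2) * |1 - 0| := by
      refine intervalIntegral.norm_integral_le_of_norm_le_const fun x hx => ?_
      rw [uIoc_of_le zero_le_one] at hx
      have := hN n hn x ⟨le_of_lt hx.1, hx.2⟩
      rw [Real.dist_eq, abs_sub_comm] at this
      rw [Real.norm_eq_abs]
      exact le_of_lt this
    rw [Real.dist_eq, h1]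
    calc |∫ t in (0:ℝ)..1, (fn n t - f t)| ≤ (ε/2) * |1 - 0| := h2
      _ < ε := by rw [abs_of_nonneg] <;> linarith
  have hmean_eq : ∀ n, mean01 (μn n) - 1/2 = -(an n) / r n := by
    intro n
    have h1 := mean01_eq (hsn n)
    have h2 := mean01_eq hsH
    rw [hHmean] at h2
    have h3 : (∫ t in (0:ℝ)..1, cdf01 (μn n) t)
        = (∫ t in (0:ℝ)..1, F t) + (an n) / r n := by
      rw [intervalIntegral.integral_congr (g := fun t => F t + fn n t / r n)
        (fun t _ => hcdfn n t)]
      rw [intervalIntegral.integral_add (cdf01_intInt 0 1) ((hfnInt n).div_const _),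
        intervalIntegral.integral_div]
    rw [h1, h3]
    have : (1:ℝ)/2 = 1 - ∫ t in (0:ℝ)..1, F t := h2
    rw [this]; ring
  have hmn : Tendsto (fun n => mean01 (μn n)) atTop (𝓝 (1/2)) := by
    have h0 : Tendsto (fun n => an n / r n) atTop (𝓝 0) := han.div_atTop hr
    have heq : (fun n => mean01 (μn n)) = fun n => 1/2 - an n / r n := funext fun n => by
      have h := hmean_eq n; rw [neg_div] at h; linarith
    rw [heq]
    simpa using tendsto_const_nhds.sub h0
  -- variance convergence
  have hIn : ∀ n, IntervalIntegrable (fun t => 2*t*cdf01 (μn n) t) volume 0 1 := fun n =>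
    (cdf01_intInt 0 1).continuousOn_mul (continuous_const.mul continuous_id).continuousOn
  have hI : IntervalIntegrable (fun t => 2*t*F t) volume 0 1 :=
    (cdf01_intInt 0 1).continuousOn_mul (continuous_const.mul continuous_id).continuousOn
  have hvn : Tendsto (fun n => var01 (μn n)) atTop (𝓝 (var01 μH)) := by
    have hdiff : ∀ n, (∫ t in (0:ℝ)..1, 2*t*cdf01 (μn n) t) - (∫ t in (0:ℝ)..1, 2*t*F t)
        = ∫ t in (0:ℝ)..1, 2*t*fn n t/r n := by
      intro n
      rw [← intervalIntegral.integral_sub (hIn n) hI]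
      refine intervalIntegral.integral_congr fun t _ => ?_
      rw [hcdfn n t]; ring
    have hdf0 : Tendsto (fun n => ∫ t in (0:ℝ)..1, 2*t*fn n t/r n) atTop (𝓝 0) := by
      refine squeeze_zero_norm' ?_
        ((tendsto_const_nhds (x := 2*M)).div_atTop hr)
      filter_upwards [hMev, eventually_ge_atTop 0] with n hn _
      have hb : ∀ x ∈ Set.uIoc (0:ℝ) 1, ‖2*x*fn n x/r n‖ ≤ 2*M/r n := by
        intro x hx
        rw [uIoc_of_le zero_le_one] at hx
        have h1 : |fn n x| ≤ M := hn x ⟨le_of_lt hx.1, hx.2⟩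
        have hMnn : (0:ℝ) ≤ M := le_trans (abs_nonneg _) h1
        rw [Real.norm_eq_abs, abs_div, abs_of_pos (hrpos n)]
        have hnum : |2*x*fn n x| ≤ 2*M := by
          rw [abs_mul]
          have hx2 : |(2:ℝ)*x| ≤ 2 := by
            rw [abs_of_nonneg (by linarith [hx.1] : (0:ℝ) ≤ 2*x)]; linarith [hx.2]
          exact mul_le_mul hx2 h1 (abs_nonneg _) (by norm_num)
        gcongr
        exact (hrpos n).le
      have := intervalIntegral.norm_integral_le_of_norm_le_const hb
      simpa using this
    have hInt : Tendsto (fun n => ∫ t in (0:ℝ)..1, 2*t*cdf01 (μn n) t) atTop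
        (𝓝 (∫ t in (0:ℝ)..1, 2*t*F t)) := by
      rw [← tendsto_sub_nhds_zero_iff]
      have heq1 : (fun n => (∫ t in (0:ℝ)..1, 2*t*cdf01 (μn n) t)
          - ∫ t in (0:ℝ)..1, 2*t*F t) = fun n => ∫ t in (0:ℝ)..1, 2*t*fn n t/r n :=
        funext hdiff
      rw [heq1]; exact hdf0
    have hval : Tendsto (fun n => (1 - ∫ t in (0:ℝ)..1, 2*t*cdf01 (μn n) t)
        - (mean01 (μn n))^2) atTop
        (𝓝 ((1 - ∫ t in (0:ℝ)..1, 2*t*F t) - (1/2)^2)) :=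
      (tendsto_const_nhds.sub hInt).sub (hmn.pow 2)
    have heq2 : (fun n => (1 - ∫ t in (0:ℝ)..1, 2*t*cdf01 (μn n) t) - (mean01 (μn n))^2)
        = fun n => var01 (μn n) := funext fun n => (var01_eq (hsn n)).symm
    rw [heq2] at hval
    have : (1 - ∫ t in (0:ℝ)..1, 2*t*F t) - ((1:ℝ)/2)^2 = var01 μH := by
      rw [var01_eq hsH, hHmean]
    rwa [this] at hval
  set c := a / var01 μH with hc
  have hcn : Tendsto (fun n => an n / var01 (μn n)) atTop (𝓝 c) :=
    han.div hvn hHvar.ne'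
  -- the limit function via BH
  set BH : ℝ → ℝ := fun w => w * F w - (∫ t in (0:ℝ)..w, F t) - (1/2) * F w with hBH
  have hBH_eq : ∀ w ∈ Icc (0:ℝ) 1, (∫ v in Icc (0:ℝ) w, (1/2 - v) ∂μH) = -(BH w) := by
    intro w hw
    have h1 := B_formula hsH hw
    have h2 : (∫ v in Icc (0:ℝ) w, (1/2 - v) ∂μH)
        = -∫ v in Icc (0:ℝ) w, (v - mean01 μH) ∂μH := by
      rw [← integral_neg]
      refine setIntegral_congr_fun measurableSet_Icc fun v _ => by rw [hHmean]; ring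
    rw [h2, h1, hHmean]
  have hFbd : ∀ ν : Measure ℝ, ∀ _ : IsProbabilityMeasure ν, ∀ t, |cdf01 ν t| ≤ 1 :=
    fun ν hν t => by
      rw [abs_of_nonneg (cdf01_nonneg t)]; exact cdf01_le_one t
  have hBH_bd : ∀ w ∈ Icc (0:ℝ) 1, |BH w| ≤ 3 := by
    intro w hw
    have h1 : |w * F w| ≤ 1 := by
      rw [abs_mul]
      exact mul_le_one₀ (abs_le.2 ⟨by linarith [hw.1], hw.2⟩) (abs_nonneg _)
        (hFbd μH inferInstance w)
    have h2 : |∫ t in (0:ℝ)..w, F t| ≤ 1 := by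
      have := intervalIntegral.norm_integral_le_of_norm_le_const
        (C := 1) (a := (0:ℝ)) (b := w) (f := F) fun x _ => by
          rw [Real.norm_eq_abs]; exact hFbd μH inferInstance x
      rw [Real.norm_eq_abs] at this
      refine le_trans this ?_
      rw [sub_zero, abs_of_nonneg hw.1]; linarith [hw.2]
    have h3 : |(1/2 : ℝ) * F w| ≤ 1 := by
      rw [abs_mul]
      have := hFbd μH inferInstance w
      rw [show |(1/2 : ℝ)| = 1/2 by norm_num]
      nlinarith [abs_nonneg (F w)]
    calc |BH w| ≤ |w * F w - (∫ t in (0:ℝ)..w, F t)| + |(1/2) * F w| := abs_sub _ _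
      _ ≤ |w * F w| + |∫ t in (0:ℝ)..w, F t| + |(1/2) * F w| := by
          linarith [abs_sub (w * F w) (∫ t in (0:ℝ)..w, F t)]
      _ ≤ 3 := by linarith
  -- main identity
  have hmain : ∀ n, ∀ w ∈ Icc (0:ℝ) 1,
      r n * (PhiMap (μn n) w - F w)
        = fn n w + (an n / var01 (μn n)) *
          (w * cdf01 (μn n) w - (∫ t in (0:ℝ)..w, cdf01 (μn n) t)
            - mean01 (μn n) * cdf01 (μn n) w) := by
    intro n w hw
    have hB := B_formula (hsn n) hw
    set B := w * cdf01 (μn n) w - (∫ t in (0:ℝ)..w, cdf01 (μn n) t)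
      - mean01 (μn n) * cdf01 (μn n) w with hBdef
    rw [PhiMap, hB, hfn_eq n w, hmean_eq n]
    have hsc : r n * (-an n / r n / var01 (μn n)) = -(an n) / var01 (μn n) := by
      field_simp
      rw [mul_div_mul_left _ _ (hrne n)]
    have expand : r n * ((cdf01 (μn n) w - (-an n / r n / var01 (μn n)) * B) - F w)
        = r n * (cdf01 (μn n) w - F w) + (r n * (-an n / r n / var01 (μn n))) * (-B) := by
      ring
    rw [expand, hsc]
    ring
  -- final epsilon argument
  rw [Metric.tendstoUniformlyOn_iff]
  intro ε hε
  have hc1 : (0:ℝ) < |c| + 1 := by positivity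
  have hDn : Tendsto (fun n => 3*M/r n + |mean01 (μn n) - 1/2|) atTop (𝓝 0) := by
    have t1 : Tendsto (fun n => 3*M/r n) atTop (𝓝 0) :=
      (tendsto_const_nhds (x := 3*M)).div_atTop hr
    have t2 : Tendsto (fun n => |mean01 (μn n) - 1/2|) atTop (𝓝 0) := by
      have := (hmn.sub (tendsto_const_nhds (x := (1:ℝ)/2))).abs
      simpa using this
    simpa using t1.add t2
  have E2 : ∀ᶠ n in atTop, |an n / var01 (μn n) - c| < min (ε/9) 1 := by
    have hlt : (0:ℝ) < min (ε/9) 1 := lt_min (by positivity) one_pos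
    obtain ⟨N, hN⟩ := Metric.tendsto_atTop.1 hcn (min (ε/9) 1) hlt
    rw [eventually_atTop]
    exact ⟨N, fun n hn => by have := hN n hn; rwa [Real.dist_eq] at this⟩
  have E3 : ∀ᶠ n in atTop, 3*M/r n + |mean01 (μn n) - 1/2| < ε/(3*(|c|+1)) := by
    have hpos : (0:ℝ) < ε/(3*(|c|+1)) := by positivity
    exact Filter.Tendsto.eventually_lt_const hpos hDn
  filter_upwards [Metric.tendstoUniformlyOn_iff.1 hconv (ε/3) (by positivity),
    E2, E3, hMev] with n h1 h2 h3 h4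
  intro w hw
  have hMnn : (0:ℝ) ≤ M := le_trans (abs_nonneg _) (h4 0 ⟨le_refl 0, zero_le_one⟩)
  rw [Real.dist_eq, hmain n w hw, hBH_eq w hw]
  set cn := an n / var01 (μn n) with hcn_def
  set BFn := w * cdf01 (μn n) w - (∫ t in (0:ℝ)..w, cdf01 (μn n) t)
    - mean01 (μn n) * cdf01 (μn n) w with hBFn
  have hlim : f w - (var01 μH)⁻¹ * a * -(BH w) = f w + c * BH w := by
    rw [hc, div_eq_mul_inv]; ring
  rw [hlim]
  -- component estimates
  have b1 : |f w - fn n w| < ε/3 := by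
    have := h1 w hw; rwa [Real.dist_eq] at this
  have b2 : |c - cn| ≤ min (ε/9) 1 := by
    have := le_of_lt h2; rwa [abs_sub_comm] at this
  have b2a : |c - cn| ≤ ε/9 := b2.trans (min_le_left _ _)
  have hcnbd : |cn| ≤ |c| + 1 := by
    have h5 := abs_sub_abs_le_abs_sub cn c
    have h6 : |cn - c| ≤ 1 := (le_of_lt h2).trans (min_le_right _ _)
    linarith
  have hFd : ∀ t, t ∈ Icc (0:ℝ) 1 → |cdf01 (μn n) t - F t| ≤ M / r n := by
    intro t ht
    have e : cdf01 (μn n) t - F t = fn n t / r n := by rw [hcdfn n t]; ring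
    rw [e, abs_div, abs_of_pos (hrpos n)]
    gcongr
    · exact (hrpos n).le
    · exact h4 t ht
  have hIntd : |(∫ t in (0:ℝ)..w, cdf01 (μn n) t) - ∫ t in (0:ℝ)..w, F t| ≤ M / r n := by
    have e : (∫ t in (0:ℝ)..w, cdf01 (μn n) t) - ∫ t in (0:ℝ)..w, F t
        = ∫ t in (0:ℝ)..w, (cdf01 (μn n) t - F t) :=
      (intervalIntegral.integral_sub (cdf01_intInt 0 w) (cdf01_intInt 0 w)).symm
    rw [e]
    have hb := intervalIntegral.norm_integral_le_of_norm_le_const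
      (C := M / r n) (a := (0:ℝ)) (b := w) (f := fun t => cdf01 (μn n) t - F t)
      (fun x hx => by
        rw [uIoc_of_le hw.1] at hx
        rw [Real.norm_eq_abs]
        exact hFd x ⟨le_of_lt hx.1, hx.2.trans hw.2⟩)
    rw [Real.norm_eq_abs, sub_zero, abs_of_nonneg hw.1] at hb
    refine hb.trans ?_
    exact mul_le_of_le_one_right (div_nonneg hMnn (hrpos n).le) hw.2
  have hmd : |mean01 (μn n) * cdf01 (μn n) w - (1/2) * F w|
      ≤ |mean01 (μn n) - 1/2| + M / r n := by
    have e : mean01 (μn n) * cdf01 (μn n) w - (1/2) * F w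
        = (mean01 (μn n) - 1/2) * cdf01 (μn n) w + (1/2) * (cdf01 (μn n) w - F w) := by
      ring
    have e1 : |(mean01 (μn n) - 1/2) * cdf01 (μn n) w| ≤ |mean01 (μn n) - 1/2| := by
      rw [abs_mul]
      exact mul_le_of_le_one_right (abs_nonneg _) (hFbd (μn n) inferInstance w)
    have e2 : |(1/2 : ℝ) * (cdf01 (μn n) w - F w)| ≤ M / r n := by
      rw [abs_mul, show |(1/2:ℝ)| = 1/2 by norm_num]
      have := hFd w hw
      nlinarith [abs_nonneg (cdf01 (μn n) w - F w)]
    calc |mean01 (μn n) * cdf01 (μn n) w - (1/2) * F w|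
        = |(mean01 (μn n) - 1/2) * cdf01 (μn n) w + (1/2) * (cdf01 (μn n) w - F w)| := by
          rw [e]
      _ ≤ |(mean01 (μn n) - 1/2) * cdf01 (μn n) w| + |(1/2) * (cdf01 (μn n) w - F w)| :=
          abs_add_le _ _
      _ ≤ |mean01 (μn n) - 1/2| + M / r n := by linarith
  have hBd : |BFn - BH w| ≤ 3*M/r n + |mean01 (μn n) - 1/2| := by
    have e : BFn - BH w = (w * (cdf01 (μn n) w - F w)
        - ((∫ t in (0:ℝ)..w, cdf01 (μn n) t) - ∫ t in (0:ℝ)..w, F t))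
        - (mean01 (μn n) * cdf01 (μn n) w - (1/2) * F w) := by
      rw [hBFn, hBH]; ring
    have e0 : |w * (cdf01 (μn n) w - F w)| ≤ M / r n := by
      rw [abs_mul, abs_of_nonneg hw.1]
      have := hFd w hw
      nlinarith [abs_nonneg (cdf01 (μn n) w - F w), hw.2, hw.1,
        div_nonneg hMnn (hrpos n).le]
    have t1 := abs_sub (w * (cdf01 (μn n) w - F w))
      ((∫ t in (0:ℝ)..w, cdf01 (μn n) t) - ∫ t in (0:ℝ)..w, F t)
    have t2 := abs_sub (w * (cdf01 (μn n) w - F w)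
        - ((∫ t in (0:ℝ)..w, cdf01 (μn n) t) - ∫ t in (0:ℝ)..w, F t))
      (mean01 (μn n) * cdf01 (μn n) w - (1/2) * F w)
    rw [e]
    have hrn3 : 3*M/r n = M/r n + M/r n + M/r n := by ring
    rw [hrn3]
    linarith
  -- assemble
  have key : |(f w + c * BH w) - (fn n w + cn * BFn)|
      ≤ |f w - fn n w| + |c - cn| * |BH w| + |cn| * |BFn - BH w| := by
    have e : (f w + c * BH w) - (fn n w + cn * BFn)
        = ((f w - fn n w) + (c - cn) * BH w) + cn * (BH w - BFn) := by ring
    rw [e]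
    calc |((f w - fn n w) + (c - cn) * BH w) + cn * (BH w - BFn)|
        ≤ |(f w - fn n w) + (c - cn) * BH w| + |cn * (BH w - BFn)| := abs_add_le _ _
      _ ≤ |f w - fn n w| + |(c - cn) * BH w| + |cn * (BH w - BFn)| := by
          linarith [abs_add_le (f w - fn n w) ((c - cn) * BH w)]
      _ = |f w - fn n w| + |c - cn| * |BH w| + |cn| * |BFn - BH w| := by
          rw [abs_mul, abs_mul, abs_sub_comm (BH w) BFn]
  have term2 : |c - cn| * |BH w| ≤ (ε/9) * 3 :=
    mul_le_mul b2a (hBH_bd w hw) (abs_nonneg _) (by positivity)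
  have term3 : |cn| * |BFn - BH w| ≤ (|c| + 1) * (ε/(3*(|c|+1))) :=
    mul_le_mul hcnbd (le_of_lt (lt_of_le_of_lt hBd h3)) (abs_nonneg _) (by positivity)
  have e3 : (|c| + 1) * (ε/(3*(|c|+1))) = ε/3 := by
    field_simp
  linarith
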